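/- Corollary (the optimal budget is a cumulative class size): let v ≥ 0 and k > 0, and suppose every password has positive probability, with the distinct probability values p_1 > p_2 > … > p_{n'} > 0 attained by exactly c_1, …, c_{n'} passwords respectively (so Σ_{m=1}^{n'} c_m = n). If (π*, B*) is an optimal strategy, i.e., U(v,k,π*,B*) ≥ U(v,k,π,B) for all strategies (π,B), then B* lies in the set {0, c_1, c_1 + c_2, …, Σ_{m=1}^{n'} c_m}. -/

import Mathlib

open scoped Classical

/- Context: P finite set of passwords, p a probability distribution on P,
strategies (π, B) with π : Fin (Fintype.card P) ≃ P (0-indexed bijection) and B ≤ |P|.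
λ(π, B) = Σ_{i=1}^{B} p(π(i)), and
U(v,k,π,B) = v·λ(π,B) − k·Σ_{i=1}^{B} (1 − λ(π, i−1)). -/

variable {P : Type*} [Fintype P]

noncomputable def lam (p : P → ℝ) (π : Fin (Fintype.card P) ≃ P) (B : ℕ) : ℝ :=
  ∑ i ∈ Finset.univ.filter (fun i : Fin (Fintype.card P) => (i : ℕ) < B), p (π i)

noncomputable def U (p : P → ℝ) (v k : ℝ) (π : Fin (Fintype.card P) ≃ P) (B : ℕ) : ℝ :=
  v * lam p π B - k * ∑ i ∈ Finset.range B, (1 - lam p π i)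

lemma lam_congr (p : P → ℝ) (π π' : Fin (Fintype.card P) ≃ P) (B i : ℕ)
    (h : ∀ j : Fin (Fintype.card P), (j : ℕ) < B → π j = π' j) (hi : i ≤ B) :
    lam p π i = lam p π' i := by
  unfold lam
  refine Finset.sum_congr rfl fun j hj => ?_
  rw [Finset.mem_filter] at hj
  rw [h j (lt_of_lt_of_le hj.2 hi)]

lemma U_congr (p : P → ℝ) (v k : ℝ) (π π' : Fin (Fintype.card P) ≃ P) (B : ℕ)
    (h : ∀ j : Fin (Fintype.card P), (j : ℕ) < B → π j = π' j) :
    U p v k π B = U p v k π' B := by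
  unfold U
  rw [lam_congr p π π' B B h le_rfl]
  congr 1
  refine congrArg _ (Finset.sum_congr rfl fun i hi => ?_)
  rw [Finset.mem_range] at hi
  rw [lam_congr p π π' B i h hi.le]

lemma lam_succ (p : P → ℝ) (π : Fin (Fintype.card P) ≃ P) (B : ℕ)
    (h : B < Fintype.card P) :
    lam p π (B + 1) = lam p π B + p (π ⟨B, h⟩) := by
  unfold lam
  have hset : Finset.univ.filter (fun i : Fin (Fintype.card P) => (i : ℕ) < B + 1)
      = insert ⟨B, h⟩ (Finset.univ.filter (fun i : Fin (Fintype.card P) => (i : ℕ) < B)) := by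
    ext i
    simp [Nat.lt_succ_iff_lt_or_eq, Fin.ext_iff, or_comm]
    omega
  rw [hset, Finset.sum_insert (by simp)]
  ring

lemma U_succ (p : P → ℝ) (v k : ℝ) (π : Fin (Fintype.card P) ≃ P) (B : ℕ)
    (h : B < Fintype.card P) :
    U p v k π (B + 1) = U p v k π B + (v * p (π ⟨B, h⟩) - k * (1 - lam p π B)) := by
  unfold U
  rw [lam_succ p π B h, Finset.sum_range_succ]
  ring

lemma U_formula (p : P → ℝ) (v k : ℝ) (π : Fin (Fintype.card P) ≃ P) (B : ℕ)
    (hB : B ≤ Fintype.card P) :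
    U p v k π B = (∑ i ∈ Finset.univ.filter (fun i : Fin (Fintype.card P) => (i : ℕ) < B),
      p (π i) * (v + k * ((B : ℝ) - 1 - (i : ℕ)))) - k * B := by
  induction B with
  | zero => simp [U, lam]
  | succ B ih =>
    have hlt : B < Fintype.card P := hB
    rw [U_succ p v k π B hlt, ih hlt.le]
    have hset : Finset.univ.filter (fun i : Fin (Fintype.card P) => (i : ℕ) < B + 1)
        = insert ⟨B, hlt⟩ (Finset.univ.filter (fun i : Fin (Fintype.card P) => (i : ℕ) < B)) := by
      ext i
      simp [Nat.lt_succ_iff_lt_or_eq, Fin.ext_iff, or_comm]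
      omega
    rw [hset, Finset.sum_insert (by simp)]
    have hlam : lam p π B = ∑ i ∈ Finset.univ.filter
        (fun i : Fin (Fintype.card P) => (i : ℕ) < B), p (π i) := rfl
    rw [hlam]
    rw [Finset.sum_congr rfl (fun i _ => by push_cast; ring :
      ∀ i ∈ Finset.univ.filter (fun i : Fin (Fintype.card P) => (i : ℕ) < B),
        p (π i) * (v + k * (((B + 1 : ℕ) : ℝ) - 1 - (i : ℕ)))
          = p (π i) * (v + k * ((B : ℝ) - 1 - (i : ℕ))) + k * p (π i))]
    rw [Finset.sum_add_distrib, ← Finset.mul_sum]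
    push_cast
    ring

lemma U_swap_out (p : P → ℝ) (v k : ℝ) (π : Fin (Fintype.card P) ≃ P) (B : ℕ)
    (hB : B ≤ Fintype.card P) (j j' : Fin (Fintype.card P))
    (hj : (j : ℕ) < B) (hj' : B ≤ (j' : ℕ)) :
    U p v k ((Equiv.swap j j').trans π) B
      = U p v k π B + (p (π j') - p (π j)) * (v + k * ((B : ℝ) - 1 - (j : ℕ))) := by
  rw [U_formula p v k _ B hB, U_formula p v k π B hB]
  set s := Finset.univ.filter (fun i : Fin (Fintype.card P) => (i : ℕ) < B) with hs
  have hjmem : j ∈ s := by simp [hs, hj]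
  have e2 : (∑ i ∈ s, p (π i) * (v + k * ((B : ℝ) - 1 - (i : ℕ))))
      = p (π j) * (v + k * ((B : ℝ) - 1 - (j : ℕ)))
        + ∑ i ∈ s.erase j, p (π i) * (v + k * ((B : ℝ) - 1 - (i : ℕ))) :=
    (Finset.add_sum_erase s _ hjmem).symm
  have e1 : (∑ i ∈ s, p ((Equiv.swap j j').trans π i) * (v + k * ((B : ℝ) - 1 - (i : ℕ))))
      = p (π j') * (v + k * ((B : ℝ) - 1 - (j : ℕ)))
        + ∑ i ∈ s.erase j, p (π i) * (v + k * ((B : ℝ) - 1 - (i : ℕ))) := by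
    rw [← Finset.add_sum_erase s _ hjmem]
    congr 1
    · simp
    · refine Finset.sum_congr rfl fun i hi => ?_
      rw [Finset.mem_erase] at hi
      have hine : i ≠ j' := by
        rintro rfl
        have : (i : ℕ) < B := by simpa [hs] using hi.2
        omega
      simp [Equiv.swap_apply_of_ne_of_ne hi.1 hine]
  rw [e1, e2]
  ring

lemma U_swap_in (p : P → ℝ) (v k : ℝ) (π : Fin (Fintype.card P) ≃ P) (B : ℕ)
    (hB : B ≤ Fintype.card P) (j j' : Fin (Fintype.card P))
    (hj : (j : ℕ) < B) (hj' : (j' : ℕ) < B) (hne : j ≠ j') :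
    U p v k ((Equiv.swap j j').trans π) B
      = U p v k π B + (p (π j') - p (π j)) * (k * ((j' : ℝ) - (j : ℕ))) := by
  rw [U_formula p v k _ B hB, U_formula p v k π B hB]
  set s := Finset.univ.filter (fun i : Fin (Fintype.card P) => (i : ℕ) < B) with hs
  have hjmem : j ∈ s := by simp [hs, hj]
  have hj'mem : j' ∈ s.erase j := by simp [hs, hj', hne.symm]
  have key : ∀ g : Fin (Fintype.card P) → ℝ, (∑ i ∈ s, g i)
      = g j + (g j' + ∑ i ∈ (s.erase j).erase j', g i) := by
    intro g
    rw [Finset.add_sum_erase _ g hj'mem, Finset.add_sum_erase s g hjmem]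
  rw [key, key]
  have hc : ∑ i ∈ (s.erase j).erase j',
        p ((Equiv.swap j j').trans π i) * (v + k * ((B : ℝ) - 1 - (i : ℕ)))
      = ∑ i ∈ (s.erase j).erase j',
        p (π i) * (v + k * ((B : ℝ) - 1 - (i : ℕ))) := by
    refine Finset.sum_congr rfl fun i hi => ?_
    rw [Finset.mem_erase, Finset.mem_erase] at hi
    simp [Equiv.swap_apply_of_ne_of_ne hi.2.1 hi.1]
  rw [hc]
  simp only [Equiv.trans_apply, Equiv.swap_apply_left, Equiv.swap_apply_right]
  ring

/-- Corollary (the optimal budget is a cumulative class size): let v ≥ 0, k > 0, and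
suppose every password takes one of the distinct probability values
p_1 > p_2 > … > p_{n'} > 0, attained by exactly c_1, …, c_{n'} passwords respectively.
If (π*, B*) is an optimal strategy then B* ∈ {0, c_1, c_1 + c_2, …, Σ_m c_m}. -/
theorem optimal_budget_is_cumulative_class_size (p : P → ℝ) (hp : ∀ pw, 0 ≤ p pw)
    (hsum : ∑ pw, p pw = 1) (v k : ℝ) (hv : 0 ≤ v) (hk : 0 < k)
    (n' : ℕ) (pvals : Fin n' → ℝ) (c : Fin n' → ℕ)
    (hanti : StrictAnti pvals) (hppos : ∀ m, 0 < pvals m)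
    (hcount : ∀ m, (Finset.univ.filter (fun pw : P => p pw = pvals m)).card = c m)
    (hcover : ∀ pw : P, ∃ m, p pw = pvals m)
    (πs : Fin (Fintype.card P) ≃ P) (Bs : ℕ) (hBs : Bs ≤ Fintype.card P)
    (hopt : ∀ (π : Fin (Fintype.card P) ≃ P) (B : ℕ), B ≤ Fintype.card P →
      U p v k π B ≤ U p v k πs Bs) :
    ∃ t : ℕ, t ≤ n' ∧
      Bs = ∑ m ∈ Finset.univ.filter (fun m : Fin n' => (m : ℕ) < t), c m := by
  classical
  choose f hf using hcover
  have hfiber : ∀ m, Finset.univ.filter (fun pw => f pw = m)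
      = Finset.univ.filter (fun pw => p pw = pvals m) := by
    intro m
    ext pw
    simp only [Finset.mem_filter, Finset.mem_univ, true_and]
    constructor
    · rintro rfl; exact hf pw
    · intro h; exact hanti.injective ((hf pw).symm.trans h)
  rcases Nat.eq_zero_or_pos Bs with hB0 | hBpos
  · exact ⟨0, Nat.zero_le _, by simp [hB0]⟩
  by_cases hBN : Bs = Fintype.card P
  · refine ⟨n', le_rfl, ?_⟩
    have hfilt : (Finset.univ.filter (fun m : Fin n' => (m : ℕ) < n')) = Finset.univ := by
      ext m; simp [m.isLt]
    rw [hfilt, hBN, ← Finset.card_univ,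
      Finset.card_eq_sum_card_fiberwise (f := f) (t := Finset.univ) (fun x _ => Finset.mem_univ _)]
    exact Finset.sum_congr rfl fun m _ => by rw [hfiber m, hcount m]
  have hBlt : Bs < Fintype.card P := lt_of_le_of_ne hBs hBN
  have hB1 : Bs - 1 < Fintype.card P := by omega
  have hBs1 : Bs - 1 + 1 = Bs := by omega
  set a : ℝ := p (πs ⟨Bs - 1, hB1⟩) with ha
  have hlamBs : lam p πs Bs = lam p πs (Bs - 1) + a := by
    have h := lam_succ p πs (Bs - 1) hB1
    rw [hBs1] at h
    exact h
  -- Step A: marginal of last included guess is nonnegative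
  have stepA : k * (1 - lam p πs (Bs - 1)) ≤ v * a := by
    have h := hopt πs (Bs - 1) (by omega)
    have hU := U_succ p v k πs (Bs - 1) hB1
    rw [hBs1] at hU
    linarith
  -- Step B: marginal of next guess is nonpositive
  have stepB : v * p (πs ⟨Bs, hBlt⟩) ≤ k * (1 - lam p πs (Bs - 1)) - k * a := by
    have h := hopt πs (Bs + 1) hBlt
    have hU := U_succ p v k πs Bs hBlt
    rw [hlamBs] at hU
    linarith
  have hapos : 0 < a := by rw [ha, hf]; exact hppos _
  have hbnn : 0 ≤ p (πs ⟨Bs, hBlt⟩) := hp _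
  have hvpos : 0 < v := by nlinarith [mul_nonneg hv hbnn]
  -- Step C: no excluded password has probability exactly a
  have stepC : ∀ j' : Fin (Fintype.card P), Bs ≤ (j' : ℕ) → p (πs j') ≠ a := by
    intro j' hj' hpe
    set π' := (Equiv.swap ⟨Bs, hBlt⟩ j').trans πs with hπ'
    have hagree : ∀ i : Fin (Fintype.card P), (i : ℕ) < Bs → π' i = πs i := by
      intro i hi
      have h1 : i ≠ ⟨Bs, hBlt⟩ := by intro h; rw [h] at hi; simp at hi
      have h2 : i ≠ j' := by intro h; rw [h] at hi; omega
      simp [hπ', Equiv.swap_apply_of_ne_of_ne h1 h2]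
    have hUeq : U p v k π' Bs = U p v k πs Bs := U_congr p v k π' πs Bs hagree
    have hlam' : lam p π' Bs = lam p πs Bs := lam_congr p π' πs Bs Bs hagree le_rfl
    have h := hopt π' (Bs + 1) hBlt
    have hU := U_succ p v k π' Bs hBlt
    have hval : p (π' ⟨Bs, hBlt⟩) = a := by
      rw [hπ']
      simp [Equiv.swap_apply_left, hpe]
    rw [hval, hlam', hlamBs, hUeq] at hU
    nlinarith [mul_pos hk hapos]
  -- Step D: every included password has probability at least a
  have stepD : ∀ j : Fin (Fintype.card P), (j : ℕ) < Bs → a ≤ p (πs j) := by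
    intro j hj
    rcases eq_or_lt_of_le (by omega : (j : ℕ) ≤ Bs - 1) with heq | hlt
    · have : j = ⟨Bs - 1, hB1⟩ := Fin.ext heq
      rw [this]
    · have hne : j ≠ ⟨Bs - 1, hB1⟩ := by
        intro h; rw [h] at hlt; simp at hlt
      have hswap := U_swap_in p v k πs Bs hBs j ⟨Bs - 1, hB1⟩ hj (by simp; omega) hne
      have h := hopt ((Equiv.swap j ⟨Bs - 1, hB1⟩).trans πs) Bs hBs
      rw [hswap] at h
      have hdiff : (a - p (πs j)) * (k * (((Bs : ℝ) - 1) - (j : ℕ))) ≤ 0 := by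
        have hcast : ((⟨Bs - 1, hB1⟩ : Fin (Fintype.card P)) : ℝ) = (Bs : ℝ) - 1 := by
          have h3 : ((Bs - 1 : ℕ) : ℝ) = (Bs : ℝ) - 1 := by
            rw [Nat.cast_sub hBpos, Nat.cast_one]
          simpa using h3
        rw [← hcast]
        linarith
      have hwpos : 0 < k * (((Bs : ℝ) - 1) - (j : ℕ)) := by
        have : ((j : ℕ) : ℝ) < (Bs : ℝ) - 1 := by
          have h2 : ((j : ℕ) : ℝ) + 1 ≤ ((Bs - 1 : ℕ) : ℝ) := by exact_mod_cast hlt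
          have h3 : ((Bs - 1 : ℕ) : ℝ) = (Bs : ℝ) - 1 := by
            rw [Nat.cast_sub hBpos, Nat.cast_one]
          linarith
        nlinarith
      nlinarith
  -- Step E: every excluded password has probability less than a
  have stepE : ∀ j' : Fin (Fintype.card P), Bs ≤ (j' : ℕ) → p (πs j') < a := by
    intro j' hj'
    have hswap := U_swap_out p v k πs Bs hBs ⟨Bs - 1, hB1⟩ j' (by simp; omega) hj'
    have h := hopt ((Equiv.swap ⟨Bs - 1, hB1⟩ j').trans πs) Bs hBs
    rw [hswap] at h
    have hw : v + k * ((Bs : ℝ) - 1 - ((⟨Bs - 1, hB1⟩ : Fin (Fintype.card P)) : ℕ)) = v := by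
      have h3 : ((Bs - 1 : ℕ) : ℝ) = (Bs : ℝ) - 1 := by
        rw [Nat.cast_sub hBpos, Nat.cast_one]
      simp [h3]
    rw [hw] at h
    have hle : p (πs j') ≤ a := by nlinarith
    exact lt_of_le_of_ne hle (stepC j' hj')
  -- counting
  have hcardF : (Finset.univ.filter (fun i : Fin (Fintype.card P) => (i : ℕ) < Bs)).card = Bs := by
    have hmap : Finset.univ.filter (fun i : Fin (Fintype.card P) => (i : ℕ) < Bs)
        = Finset.map ⟨Fin.castLE hBs, Fin.castLE_injective hBs⟩ Finset.univ := by
      ext i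
      simp only [Finset.mem_filter, Finset.mem_univ, true_and, Finset.mem_map,
        Function.Embedding.coeFn_mk]
      constructor
      · intro h; exact ⟨⟨(i : ℕ), h⟩, Fin.ext rfl⟩
      · rintro ⟨j, -, rfl⟩; exact j.isLt
    rw [hmap, Finset.card_map, Finset.card_univ, Fintype.card_fin]
  have himg : Finset.image (fun i => πs i)
        (Finset.univ.filter (fun i : Fin (Fintype.card P) => (i : ℕ) < Bs))
      = Finset.univ.filter (fun pw => a ≤ p pw) := by
    ext pw
    simp only [Finset.mem_image, Finset.mem_filter, Finset.mem_univ, true_and]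
    constructor
    · rintro ⟨i, hi, rfl⟩; exact stepD i hi
    · intro hpw
      refine ⟨πs.symm pw, ?_, πs.apply_symm_apply pw⟩
      by_contra h
      push_neg at h
      have := stepE (πs.symm pw) h
      rw [πs.apply_symm_apply] at this
      linarith
  have hBcard : Bs = (Finset.univ.filter (fun pw => a ≤ p pw)).card := by
    rw [← himg, Finset.card_image_of_injective _ πs.injective, hcardF]
  set m1 := f (πs ⟨Bs - 1, hB1⟩) with hm1
  have ham : a = pvals m1 := hf _
  refine ⟨(m1 : ℕ) + 1, m1.isLt, ?_⟩
  rw [hBcard]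
  have hmem : ∀ x ∈ Finset.univ.filter (fun pw => a ≤ p pw),
      f x ∈ Finset.univ.filter (fun m : Fin n' => (m : ℕ) < (m1 : ℕ) + 1) := by
    intro x hx
    simp only [Finset.mem_filter, Finset.mem_univ, true_and] at hx ⊢
    have h1 : pvals m1 ≤ pvals (f x) := by rw [← ham, ← hf x]; exact hx
    have h2 : f x ≤ m1 := hanti.le_iff_ge.mp h1
    exact Nat.lt_succ_of_le h2
  rw [Finset.card_eq_sum_card_fiberwise hmem]
  refine Finset.sum_congr rfl fun m hm => ?_
  rw [Finset.filter_filter, ← hcount m, ← hfiber m]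
  congr 1
  ext x
  simp only [Finset.mem_filter, Finset.mem_univ, true_and] at hm ⊢
  constructor
  · rintro ⟨-, h2⟩; exact h2
  · intro h2
    refine ⟨?_, h2⟩
    have hm' : m ≤ m1 := Nat.le_of_lt_succ hm
    rw [ham, hf x, h2]
    exact hanti.antitone hm'
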